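/- Let Ω be a separable completely positive map from operators on ℂ²⊗ℂ² to operators on (H₁⊗ℂ²)⊗(H₂⊗ℂ²) (separable with respect to the bracketed bipartition), and suppose a unit-trace positive semidefinite μ on H₁⊗H₂ satisfies μᵀ ⊗ H_{π/4} − Ω(H_{π/4}) ⪰ 0 with Ω realizing the projected matrix M₀(η) and tracelessness as in the Lemma. If 2μᵀ = ½ tr_{ℂ²⊗ℂ²}[(1_{H₁⊗H₂} ⊗ Ψ) Ω(Ψ)] where Ψ = Π₂ + Π₃ is a separable two-qubit operator, then μ is separable on H₁⊗H₂. -/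

import Mathlib

open Matrix Kronecker Real ComplexOrder

noncomputable section

/-- Bell vector `|Φ⁻⟩ = (|00⟩ − |11⟩)/√2`. -/
def PhiM : Fin 2 × Fin 2 → ℂ :=
  fun p => (Real.sqrt 2 : ℂ)⁻¹ *
    (if p = (0, 0) then 1 else if p = (1, 1) then -1 else 0)
/-- Bell vector `|Ψ⁺⟩ = (|01⟩ + |10⟩)/√2`. -/
def PsiP : Fin 2 × Fin 2 → ℂ :=
  fun p => (Real.sqrt 2 : ℂ)⁻¹ * (if p.1 = p.2 then 0 else 1)

/-- `Ψ = Π₂ + Π₃`, the sum of the Bell projectors onto `|Φ⁻⟩` and `|Ψ⁺⟩`. -/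
def PsiOp : Matrix (Fin 2 × Fin 2) (Fin 2 × Fin 2) ℂ :=
  vecMulVec PhiM (star PhiM) + vecMulVec PsiP (star PsiP)

/-- `tr_{ℂ²⊗ℂ²}[(1_{H₁⊗H₂} ⊗ Ψ) M]` where the output `M` of the separable map lives on
`(H₁⊗ℂ²)⊗(H₂⊗ℂ²)` and `Ψ` pairs with the two `ℂ²` factors:
`(x, y) ↦ Σ_{s,u} Ψ_{s,u} M ((x₁,u₁),(x₂,u₂)) ((y₁,s₁),(y₂,s₂))`. -/
def sandwichTrace {a b : Type*}
    (M : Matrix ((a × Fin 2) × (b × Fin 2)) ((a × Fin 2) × (b × Fin 2)) ℂ) :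
    Matrix (a × b) (a × b) ℂ :=
  fun x y => ∑ s : Fin 2 × Fin 2, ∑ u : Fin 2 × Fin 2,
    PsiOp s u * M ((x.1, u.1), (x.2, u.2)) ((y.1, s.1), (y.2, s.2))

/-- normalized eigenvectors of σ_y -/
def wv : Fin 2 → Fin 2 → ℂ :=
  fun l u => (Real.sqrt 2 : ℂ)⁻¹ *
    (if u = 0 then 1 else if l = 0 then Complex.I else -Complex.I)

def bell : Fin 2 → Fin 2 × Fin 2 → ℂ := fun l s => wv l s.1 * wv l s.2

set_option maxHeartbeats 1000000 in
lemma psiOp_decomp : PsiOp = ∑ l : Fin 2, vecMulVec (bell l) (star (bell l)) := by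
  have h2 : ((Real.sqrt 2 : ℝ) : ℂ)⁻¹ ^ 2 = 2⁻¹ := by
    rw [sq, ← mul_inv]; norm_cast
    rw [Real.mul_self_sqrt (by norm_num : (0:ℝ) ≤ 2)]; norm_num
  have h4 : ((Real.sqrt 2 : ℝ) : ℂ)⁻¹ ^ 4 = 4⁻¹ := by
    rw [show (4:ℕ) = 2*2 from rfl, pow_mul, h2]; norm_num
  have hc : (starRingEnd ℂ) ((Real.sqrt 2 : ℝ) : ℂ)⁻¹ = ((Real.sqrt 2 : ℝ) : ℂ)⁻¹ := by
    rw [map_inv₀, Complex.conj_ofReal]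
  ext ⟨s1, s2⟩ ⟨u1, u2⟩
  fin_cases s1 <;> fin_cases s2 <;> fin_cases u1 <;> fin_cases u2 <;>
  · simp only [PsiOp, Matrix.add_apply, vecMulVec_apply, PhiM, PsiP, bell, wv,
      Pi.star_apply, RCLike.star_def, Fin.sum_univ_two, Matrix.sum_apply, _root_.map_mul, hc]
    norm_num [hc]
    try ring_nf
    try simp [Complex.I_sq, h2, h4]
    try ring_nf
    try norm_num

lemma conj_sandwich {n N : Type*} [Fintype n] (K : Matrix N n ℂ) (f : n → ℂ) :
    K * vecMulVec f (star f) * Kᴴ = vecMulVec (K *ᵥ f) (star (K *ᵥ f)) := by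
  ext α β
  simp only [mul_apply, vecMulVec_apply, conjTranspose_apply, mulVec, dotProduct,
    Pi.star_apply, RCLike.star_def, map_sum, _root_.map_mul, Finset.sum_mul, Finset.mul_sum]
  rw [Finset.sum_comm]
  conv_rhs => rw [Finset.sum_comm]
  exact Finset.sum_congr rfl fun γ _ => Finset.sum_congr rfl fun δ _ => by ring

lemma kron_mulVec {p q r s : Type*} [Fintype q] [Fintype s]
    (A : Matrix p q ℂ) (B : Matrix r s ℂ) (g : q → ℂ) (h : s → ℂ) :
    (A ⊗ₖ B) *ᵥ (fun γ : q × s => g γ.1 * h γ.2)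
      = fun α => (A *ᵥ g) α.1 * (B *ᵥ h) α.2 := by
  funext α
  simp only [mulVec, dotProduct, kroneckerMap_apply, Fintype.sum_prod_type,
    Finset.sum_mul, Finset.mul_sum]
  conv_rhs => rw [Finset.sum_comm]
  exact Finset.sum_congr rfl fun γ _ => Finset.sum_congr rfl fun δ _ => by ring

lemma vecMulVec_star_posSemidef {n : Type*} [Fintype n] (v : n → ℂ) :
    (vecMulVec v (star v)).PosSemidef := by
  rw [posSemidef_iff_dotProduct_mulVec]
  constructor
  · ext i j
    simp [vecMulVec_apply, conjTranspose_apply, mul_comm]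
  · intro z
    have key : star z ⬝ᵥ (vecMulVec v (star v)) *ᵥ z
        = star (star v ⬝ᵥ z) * (star v ⬝ᵥ z) := by
      simp only [dotProduct, vecMulVec_apply, mulVec, Pi.star_apply, RCLike.star_def,
        map_sum, _root_.map_mul, Complex.conj_conj, Finset.mul_sum, Finset.sum_mul]
      rw [Finset.sum_comm]
      exact Finset.sum_congr rfl fun i _ => Finset.sum_congr rfl fun j _ => by ring
    rw [key]
    exact star_mul_self_nonneg _

lemma sandwichTrace_sum {a b ι : Type*} (s : Finset ι)
    (M : ι → Matrix ((a × Fin 2) × (b × Fin 2)) ((a × Fin 2) × (b × Fin 2)) ℂ) :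
    sandwichTrace (∑ i ∈ s, M i) = ∑ i ∈ s, sandwichTrace (M i) := by
  funext x y
  simp only [sandwichTrace, Matrix.sum_apply, Finset.mul_sum]
  trans ∑ s' : Fin 2 × Fin 2, ∑ i ∈ s, ∑ u : Fin 2 × Fin 2,
      PsiOp s' u * M i ((x.1, u.1), (x.2, u.2)) ((y.1, s'.1), (y.2, s'.2))
  · exact Finset.sum_congr rfl fun _ _ => Finset.sum_comm
  · exact Finset.sum_comm

set_option maxHeartbeats 2000000 in
lemma sandwich_prod {a b : Type*} (g : a × Fin 2 → ℂ) (h : b × Fin 2 → ℂ) (x y : a × b) :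
    sandwichTrace (vecMulVec (fun α : (a × Fin 2) × (b × Fin 2) => g α.1 * h α.2)
        (star fun α : (a × Fin 2) × (b × Fin 2) => g α.1 * h α.2)) x y
      = ∑ l : Fin 2,
          ((∑ u : Fin 2, (starRingEnd ℂ) (wv l u) * g (x.1, u)) *
            (∑ u : Fin 2, (starRingEnd ℂ) (wv l u) * h (x.2, u))) *
          (starRingEnd ℂ) ((∑ u : Fin 2, (starRingEnd ℂ) (wv l u) * g (y.1, u)) *
            (∑ u : Fin 2, (starRingEnd ℂ) (wv l u) * h (y.2, u))) := by
  simp only [sandwichTrace, psiOp_decomp, Matrix.sum_apply, Matrix.add_apply,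
    vecMulVec_apply, bell, Pi.star_apply, RCLike.star_def, _root_.map_mul, map_sum, map_add,
    Complex.conj_conj, Fintype.sum_prod_type, Fin.sum_univ_two]
  ring


def Pv {a : Type*} (F : Matrix (a × Fin 2) (Fin 2) ℂ) (j l : Fin 2) : a → ℂ :=
  fun t => ∑ u : Fin 2, (starRingEnd ℂ) (wv l u) * (F *ᵥ wv j) (t, u)

def Amat {a : Type*} (F : Matrix (a × Fin 2) (Fin 2) ℂ) (j l : Fin 2) : Matrix a a ℂ :=
  vecMulVec (fun t => (2:ℂ)⁻¹ * (starRingEnd ℂ) (Pv F j l t))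
    (star fun t => (2:ℂ)⁻¹ * (starRingEnd ℂ) (Pv F j l t))

def Bmat {b : Type*} (F : Matrix (b × Fin 2) (Fin 2) ℂ) (j l : Fin 2) : Matrix b b ℂ :=
  vecMulVec (fun t => (starRingEnd ℂ) (Pv F j l t))
    (star fun t => (starRingEnd ℂ) (Pv F j l t))

def idxEquiv (m : ℕ) : Fin m × Fin 2 × Fin 2 ≃ Fin (m * 2 * 2) :=
  (Equiv.prodAssoc (Fin m) (Fin 2) (Fin 2)).symm.trans
    ((finProdFinEquiv.prodCongr (Equiv.refl (Fin 2))).trans finProdFinEquiv)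

/-- If `μ` is a unit-trace PSD matrix on `H₁⊗H₂` satisfying
`2μᵀ = ½ tr_{ℂ²⊗ℂ²}[(1 ⊗ Ψ) Ω(Ψ)]` for a separable map
`Ω(X) = Σᵢ (F₁ⁱ⊗F₂ⁱ) X (F₁ⁱ⊗F₂ⁱ)†` with `Fₖⁱ : ℂ² → Hₖ⊗ℂ²`,
then `μ` is separable on `H₁⊗H₂`. -/
theorem mu_separable
    {a b : Type*} [Fintype a] [Fintype b] [DecidableEq a] [DecidableEq b]
    (μ : Matrix (a × b) (a × b) ℂ) (hμ : μ.PosSemidef) (hμtr : μ.trace = 1)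
    (m : ℕ)
    (F₁ : Fin m → Matrix (a × Fin 2) (Fin 2) ℂ)
    (F₂ : Fin m → Matrix (b × Fin 2) (Fin 2) ℂ)
    (h : (2 : ℂ) • μᵀ = (2 : ℂ)⁻¹ •
      sandwichTrace (∑ i, (F₁ i ⊗ₖ F₂ i) * PsiOp * (F₁ i ⊗ₖ F₂ i)ᴴ)) :
    ∃ (k : ℕ) (A : Fin k → Matrix a a ℂ) (B : Fin k → Matrix b b ℂ),
      (∀ i, (A i).PosSemidef ∧ (B i).PosSemidef) ∧
      μ = ∑ i, A i ⊗ₖ B i := by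
  refine ⟨m * 2 * 2,
    fun n => Amat (F₁ ((idxEquiv m).symm n).1) ((idxEquiv m).symm n).2.1 ((idxEquiv m).symm n).2.2,
    fun n => Bmat (F₂ ((idxEquiv m).symm n).1) ((idxEquiv m).symm n).2.1 ((idxEquiv m).symm n).2.2,
    fun n => ⟨vecMulVec_star_posSemidef _, vecMulVec_star_posSemidef _⟩, ?_⟩
  rw [(Fintype.sum_equiv (idxEquiv m)
      (fun t : Fin m × Fin 2 × Fin 2 => Amat (F₁ t.1) t.2.1 t.2.2 ⊗ₖ Bmat (F₂ t.1) t.2.1 t.2.2)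
      _ (fun t => by simp)).symm]
  have hMdec : (∑ i, (F₁ i ⊗ₖ F₂ i) * PsiOp * (F₁ i ⊗ₖ F₂ i)ᴴ)
      = ∑ i, ∑ j : Fin 2,
        vecMulVec (fun α : (a × Fin 2) × (b × Fin 2) => ((F₁ i) *ᵥ wv j) α.1 * ((F₂ i) *ᵥ wv j) α.2)
          (star fun α : (a × Fin 2) × (b × Fin 2) =>
            ((F₁ i) *ᵥ wv j) α.1 * ((F₂ i) *ᵥ wv j) α.2) := by
    refine Finset.sum_congr rfl fun i _ => ?_
    rw [psiOp_decomp]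
    simp only [Matrix.mul_sum, Matrix.sum_mul]
    refine Finset.sum_congr rfl fun j _ => ?_
    rw [conj_sandwich]
    have hb : bell j = fun γ : Fin 2 × Fin 2 => wv j γ.1 * wv j γ.2 := rfl
    rw [hb, kron_mulVec]
  ext x y
  have h' : ((2:ℂ) • μᵀ) y x
      = ((2:ℂ)⁻¹ • sandwichTrace (∑ i, (F₁ i ⊗ₖ F₂ i) * PsiOp * (F₁ i ⊗ₖ F₂ i)ᴴ)) y x := by
    rw [h]
  simp only [Matrix.smul_apply, Matrix.transpose_apply, smul_eq_mul] at h'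
  have hμ4 : μ x y = (4:ℂ)⁻¹ *
      sandwichTrace (∑ i, (F₁ i ⊗ₖ F₂ i) * PsiOp * (F₁ i ⊗ₖ F₂ i)ᴴ) y x := by
    linear_combination (2:ℂ)⁻¹ * h'
  rw [hμ4, hMdec]
  simp only [sandwichTrace_sum, Matrix.sum_apply, sandwich_prod, Fintype.sum_prod_type]
  rw [Finset.mul_sum]
  refine Finset.sum_congr rfl fun i _ => ?_
  rw [Finset.mul_sum]
  refine Finset.sum_congr rfl fun j _ => ?_
  rw [Finset.mul_sum]
  refine Finset.sum_congr rfl fun l _ => ?_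
  simp only [Amat, Bmat, Pv, kroneckerMap_apply, vecMulVec_apply, Pi.star_apply,
    RCLike.star_def, _root_.map_mul, map_inv₀, Complex.conj_conj, map_ofNat]
  ring
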